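/- For even N, the spin-chain operators satisfy the two-boundary Temperley–Lieb loop relation: writing P := e_1 e_3 ⋯ e_{N−1} (the product of e_{2i−1} for 1 ≤ i ≤ N/2; these factors pairwise commute) and Q := e_2 e_4 ⋯ e_{N−2} (the product of e_{2i} for 1 ≤ i ≤ N/2−1; Q := Id when N = 2), one has P b_l Q b_r P = Y · P, where Y = sinh(h(α_l+α_r+1+Θ)/2) · sinh(h(α_l+α_r+1−Θ)/2) / (sinh(hα_l) sinh(hα_r)) and Θ := θ_l − θ_r. -/

import Mathlib

noncomputable section

/-- Basis labels of `(ℂ²)^{⊗N}`: a state (0 = ↑, 1 = ↓) for each of the `N` sites. -/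
abbrev Conf (N : ℕ) := Fin N → Fin 2

def pauliX : Matrix (Fin 2) (Fin 2) ℂ := !![0, 1; 1, 0]
def pauliY : Matrix (Fin 2) (Fin 2) ℂ := !![0, -Complex.I; Complex.I, 0]
def pauliZ : Matrix (Fin 2) (Fin 2) ℂ := !![1, 0; 0, -1]
/-- `σ⁺ = (σˣ + iσʸ)/2`. -/
def pauliP : Matrix (Fin 2) (Fin 2) ℂ := !![0, 1; 0, 0]
/-- `σ⁻ = (σˣ − iσʸ)/2`. -/
def pauliM : Matrix (Fin 2) (Fin 2) ℂ := !![0, 0; 1, 0]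

open Fin.NatCast in
/-- `X_j`: the operator on `(ℂ²)^{⊗N}` acting as the 2×2 matrix `X` on the `j`-th tensor
factor (sites labelled `1,…,N`) and as the identity on the others. -/
def siteOp (N : ℕ) [NeZero N] (X : Matrix (Fin 2) (Fin 2) ℂ) (j : ℕ) :
    Matrix (Conf N) (Conf N) ℂ :=
  Matrix.of fun f g =>
    X (f ((j - 1 : ℕ) : Fin N)) (g ((j - 1 : ℕ) : Fin N)) *
      ∏ k ∈ Finset.univ.erase ((j - 1 : ℕ) : Fin N), if f k = g k then (1 : ℂ) else 0

/-- The Temperley–Lieb generator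
`e_i = −(1/2)(σˣᵢσˣᵢ₊₁ + σʸᵢσʸᵢ₊₁ + cosh(h)(σᶻᵢσᶻᵢ₊₁ − 1) + sinh(h)(σᶻᵢ₊₁ − σᶻᵢ))`. -/
def eOp (N : ℕ) [NeZero N] (h : ℂ) (i : ℕ) : Matrix (Conf N) (Conf N) ℂ :=
  (-(1 / 2 : ℂ)) •
    (siteOp N pauliX i * siteOp N pauliX (i + 1)
      + siteOp N pauliY i * siteOp N pauliY (i + 1)
      + Complex.cosh h • (siteOp N pauliZ i * siteOp N pauliZ (i + 1) - 1)
      + Complex.sinh h • (siteOp N pauliZ (i + 1) - siteOp N pauliZ i))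

/-- The left boundary operator
`b_l = (1/(2 sinh(hα_l)))(i e^{hθ_l} σ⁺₁ + i e^{−hθ_l} σ⁻₁ + cosh(hα_l) σᶻ₁) + (1/2)·Id`. -/
def blobL (N : ℕ) [NeZero N] (h αl θl : ℂ) : Matrix (Conf N) (Conf N) ℂ :=
  (1 / (2 * Complex.sinh (h * αl))) •
    ((Complex.I * Complex.exp (h * θl)) • siteOp N pauliP 1
      + (Complex.I * Complex.exp (-(h * θl))) • siteOp N pauliM 1
      + Complex.cosh (h * αl) • siteOp N pauliZ 1)
  + (1 / 2 : ℂ) • 1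

/-- The right boundary operator
`b_r = −(1/(2 sinh(hα_r)))(i e^{hθ_r} σ⁺_N + i e^{−hθ_r} σ⁻_N + cosh(hα_r) σᶻ_N) + (1/2)·Id`. -/
def blobR (N : ℕ) [NeZero N] (h αr θr : ℂ) : Matrix (Conf N) (Conf N) ℂ :=
  (-(1 / (2 * Complex.sinh (h * αr)))) •
    ((Complex.I * Complex.exp (h * θr)) • siteOp N pauliP N
      + (Complex.I * Complex.exp (-(h * θr))) • siteOp N pauliM N
      + Complex.cosh (h * αr) • siteOp N pauliZ N)
  + (1 / 2 : ℂ) • 1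

/-- `P = e_1 e_3 ⋯ e_{N−1}`, the product of `e_{2i−1}` for `1 ≤ i ≤ N/2`. -/
def Podd (N : ℕ) [NeZero N] (h : ℂ) : Matrix (Conf N) (Conf N) ℂ :=
  ((List.range (N / 2)).map fun i => eOp N h (2 * i + 1)).prod

/-- `Q = e_2 e_4 ⋯ e_{N−2}`, the product of `e_{2i}` for `1 ≤ i ≤ N/2 − 1`
(`Q = Id` when `N = 2`). -/
def Qeven (N : ℕ) [NeZero N] (h : ℂ) : Matrix (Conf N) (Conf N) ℂ :=
  ((List.range (N / 2 - 1)).map fun i => eOp N h (2 * i + 2)).prod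

set_option linter.unusedSectionVars false

open Fin.NatCast

namespace TwoB
open Finset

variable {N : ℕ} [NeZero N]

/-! ### Local kernels -/

def dd (a b : Fin 2) : ℂ := if a = b then 1 else 0

@[simp] lemma dd_self (a : Fin 2) : dd a a = 1 := by simp [dd]

lemma dd_ne {a b : Fin 2} (h : a ≠ b) : dd a b = 0 := by simp [dd, h]

def Loc (S : Finset (Fin N)) (K : Conf N → Conf N → ℂ) : Matrix (Conf N) (Conf N) ℂ :=
  Matrix.of fun f g => K f g * ∏ k, (if k ∈ S then 1 else dd (f k) (g k))

def DepOn (S : Finset (Fin N)) (K : Conf N → Conf N → ℂ) : Prop :=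
  ∀ f f' g g' : Conf N, (∀ k ∈ S, f k = f' k) → (∀ k ∈ S, g k = g' k) → K f g = K f' g'

lemma loc_congr {S : Finset (Fin N)} {K K' : Conf N → Conf N → ℂ}
    (h : ∀ f g, K f g = K' f g) : Loc S K = Loc S K' := by
  unfold Loc; ext f g; simp only [Matrix.of_apply]; rw [h]

lemma loc_mul {S T : Finset (Fin N)} {K L : Conf N → Conf N → ℂ}
    (hST : Disjoint S T) (hK : DepOn S K) (hL : DepOn T L) :
    Loc S K * Loc T L = Loc (S ∪ T) (fun f g => K f g * L f g) := by
  ext f g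
  simp only [Matrix.mul_apply, Loc, Matrix.of_apply]
  rw [Finset.sum_eq_single (fun k => if k ∈ S then g k else f k)]
  · have hfu : K f (fun k => if k ∈ S then g k else f k) = K f g := by
      apply hK <;> intro k hk <;> simp [hk]
    have hlu : L (fun k => if k ∈ S then g k else f k) g = L f g := by
      apply hL <;> intro k hk
      · have : k ∉ S := fun hkS => (Finset.disjoint_left.mp hST hkS) hk
        simp [this]
      · rfl
    rw [hfu, hlu, mul_mul_mul_comm, ← Finset.prod_mul_distrib]
    congr 1
    apply Finset.prod_congr rfl
    intro k _
    by_cases hkS : k ∈ S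
    · have hkT : k ∉ T := Finset.disjoint_left.mp hST hkS
      simp [hkS, hkT, Finset.mem_union]
    · by_cases hkT : k ∈ T
      · simp [hkS, hkT, Finset.mem_union]
      · simp [hkS, hkT, Finset.mem_union]
  · intro u _ hu
    have : ∃ k, u k ≠ (if k ∈ S then g k else f k) := by
      by_contra hcon
      push_neg at hcon
      exact hu (funext hcon)
    obtain ⟨k, hk⟩ := this
    by_cases hkS : k ∈ S
    · have hkT : k ∉ T := Finset.disjoint_left.mp hST hkS
      rw [if_pos hkS] at hk
      have hz : (if k ∈ T then (1:ℂ) else dd (u k) (g k)) = 0 := by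
        rw [if_neg hkT, dd_ne hk]
      rw [mul_mul_mul_comm, ← Finset.prod_mul_distrib,
        Finset.prod_eq_zero (Finset.mem_univ k) (by rw [hz]; ring), mul_zero]
    · rw [if_neg hkS] at hk
      have hz : (if k ∈ S then (1:ℂ) else dd (f k) (u k)) = 0 := by
        rw [if_neg hkS, dd_ne (Ne.symm hk)]
      rw [mul_mul_mul_comm, ← Finset.prod_mul_distrib,
        Finset.prod_eq_zero (Finset.mem_univ k) (by rw [hz]; ring), mul_zero]
  · intro hmem
    exact absurd (Finset.mem_univ _) hmem

lemma loc_add {S : Finset (Fin N)} (K K' : Conf N → Conf N → ℂ) :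
    Loc S K + Loc S K' = Loc S (fun f g => K f g + K' f g) := by
  ext f g; simp [Loc]; ring

lemma loc_sub {S : Finset (Fin N)} (K K' : Conf N → Conf N → ℂ) :
    Loc S K - Loc S K' = Loc S (fun f g => K f g - K' f g) := by
  ext f g; simp [Loc]; ring

lemma loc_smul {S : Finset (Fin N)} (c : ℂ) (K : Conf N → Conf N → ℂ) :
    c • Loc S K = Loc S (fun f g => c * K f g) := by
  ext f g; simp [Loc]; ring

lemma one_eq_loc : (1 : Matrix (Conf N) (Conf N) ℂ) = Loc ∅ (fun _ _ => 1) := by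
  ext f g
  simp only [Loc, Matrix.of_apply, Finset.notMem_empty, if_false, one_mul]
  rw [show (∏ k, dd (f k) (g k)) = ∏ k, if f k = g k then (1:ℂ) else 0 from rfl,
    Finset.prod_boole]
  by_cases hfg : f = g
  · subst hfg; simp [Matrix.one_apply]
  · rw [Matrix.one_apply_ne hfg, if_neg]
    intro hall
    exact hfg (funext fun k => hall k (Finset.mem_univ k))

lemma loc_enlarge {S : Finset (Fin N)} {K : Conf N → Conf N → ℂ} {b : Fin N} (hb : b ∉ S) :
    Loc S K = Loc (insert b S) (fun f g => dd (f b) (g b) * K f g) := by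
  ext f g
  simp only [Loc, Matrix.of_apply]
  rw [← Finset.mul_prod_erase Finset.univ _ (Finset.mem_univ b),
    ← Finset.mul_prod_erase Finset.univ
      (fun k => if k ∈ insert b S then (1:ℂ) else dd (f k) (g k)) (Finset.mem_univ b)]
  rw [if_neg hb, if_pos (Finset.mem_insert_self b S)]
  have hrest : ∀ k ∈ Finset.univ.erase b,
      (if k ∈ S then (1:ℂ) else dd (f k) (g k)) =
      (if k ∈ insert b S then (1:ℂ) else dd (f k) (g k)) := by
    intro k hk
    have hkb : k ≠ b := (Finset.mem_erase.mp hk).1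
    simp [Finset.mem_insert, hkb]
  rw [Finset.prod_congr rfl hrest]
  ring

lemma loc_univ (K : Conf N → Conf N → ℂ) : Loc Finset.univ K = Matrix.of K := by
  ext f g
  simp [Loc]

/-! ### The rank-one kernel of the TL generators -/

def ww (h : ℂ) (a b : Fin 2) : ℂ :=
  if a = b then 0 else if (a : ℕ) = 0 then Complex.exp (h/2) else -Complex.exp (-(h/2))

lemma kernel16 (h : ℂ) (x y x' y' : Fin 2) :
    -(1/2 : ℂ) * (pauliX x x' * pauliX y y' + pauliY x x' * pauliY y y'
      + Complex.cosh h * (pauliZ x x' * pauliZ y y' - dd x x' * dd y y')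
      + Complex.sinh h * (dd x x' * pauliZ y y' - pauliZ x x' * dd y y'))
      = ww h x y * ww h x' y' := by
  have E1 : Complex.exp (h/2) * Complex.exp (h/2) = Complex.cosh h + Complex.sinh h := by
    rw [← Complex.exp_add, show h/2 + h/2 = h by ring, Complex.cosh_add_sinh]
  have E2 : Complex.exp (-(h/2)) * Complex.exp (-(h/2))
      = Complex.cosh h - Complex.sinh h := by
    rw [← Complex.exp_add, show -(h/2) + -(h/2) = -h by ring, Complex.cosh_sub_sinh]
  have E3 : Complex.exp (h/2) * Complex.exp (-(h/2)) = 1 := by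
    rw [← Complex.exp_add, show h/2 + -(h/2) = 0 by ring, Complex.exp_zero]
  fin_cases x <;> fin_cases y <;> fin_cases x' <;> fin_cases y' <;>
    simp [pauliX, pauliY, pauliZ, ww, dd] <;>
    first
      | ring1
      | linear_combination E1
      | linear_combination -E1
      | linear_combination E2
      | linear_combination -E2
      | linear_combination E3
      | linear_combination -E3

/-! ### `siteOp` and `eOp` as local matrices -/

lemma siteOp_eq_loc (X : Matrix (Fin 2) (Fin 2) ℂ) (j : ℕ) :
    siteOp N X j = Loc {((j - 1 : ℕ) : Fin N)}
      (fun f g => X (f ((j - 1 : ℕ) : Fin N)) (g ((j - 1 : ℕ) : Fin N))) := by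
  ext f g
  simp only [siteOp, Loc, Matrix.of_apply]
  congr 1
  rw [← Finset.mul_prod_erase Finset.univ _ (Finset.mem_univ ((j - 1 : ℕ) : Fin N)),
    if_pos (Finset.mem_singleton_self _), one_mul]
  apply Finset.prod_congr rfl
  intro k hk
  rw [if_neg (fun hmem => (Finset.mem_erase.mp hk).1 (Finset.mem_singleton.mp hmem))]
  rfl

lemma depOn_single (X : Matrix (Fin 2) (Fin 2) ℂ) (a : Fin N) :
    DepOn {a} (fun f g => X (f a) (g a)) := by
  intro f f' g g' hf hg
  show X (f a) (g a) = X (f' a) (g' a)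
  rw [hf a (Finset.mem_singleton_self a), hg a (Finset.mem_singleton_self a)]

lemma eOp_eq_loc (h : ℂ) (a : ℕ) (ha : a + 1 < N) :
    eOp N h (a + 1) = Loc {((a : ℕ) : Fin N), ((a + 1 : ℕ) : Fin N)}
      (fun f g => ww h (f ((a : ℕ) : Fin N)) (f ((a + 1 : ℕ) : Fin N))
        * ww h (g ((a : ℕ) : Fin N)) (g ((a + 1 : ℕ) : Fin N))) := by
  have haN : a < N := Nat.lt_of_succ_lt ha
  set A : Fin N := ((a : ℕ) : Fin N) with hAdef
  set B : Fin N := ((a + 1 : ℕ) : Fin N) with hBdef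
  have hAv : (A : ℕ) = a := Fin.val_cast_of_lt haN
  have hBv : (B : ℕ) = a + 1 := Fin.val_cast_of_lt ha
  have hAB : A ≠ B := by
    intro hEq
    rw [hEq, hBv] at hAv; omega
  have idx1 : ((a + 1 - 1 : ℕ) : Fin N) = A := by norm_num [hAdef]
  have idx2 : ((a + 1 + 1 - 1 : ℕ) : Fin N) = B := by
    rw [hBdef]; norm_num
  have hsite : ∀ X : Matrix (Fin 2) (Fin 2) ℂ,
      siteOp N X (a + 1) = Loc {A} (fun f g => X (f A) (g A)) := by
    intro X; rw [siteOp_eq_loc, idx1]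
  have hsite2 : ∀ X : Matrix (Fin 2) (Fin 2) ℂ,
      siteOp N X (a + 1 + 1) = Loc {B} (fun f g => X (f B) (g B)) := by
    intro X; rw [siteOp_eq_loc, idx2]
  have hdisj : Disjoint ({A} : Finset (Fin N)) {B} :=
    Finset.disjoint_singleton.mpr hAB
  have hpair : ∀ X Y : Matrix (Fin 2) (Fin 2) ℂ,
      siteOp N X (a + 1) * siteOp N Y (a + 1 + 1)
        = Loc {A, B} (fun f g => X (f A) (g A) * Y (f B) (g B)) := by
    intro X Y
    rw [hsite, hsite2, loc_mul hdisj (depOn_single X A) (depOn_single Y B),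
      ← Finset.insert_eq]
  have hone : (1 : Matrix (Conf N) (Conf N) ℂ)
      = Loc {A, B} (fun f g => dd (f A) (g A) * dd (f B) (g B)) := by
    rw [one_eq_loc, loc_enlarge (Finset.notMem_empty B),
      show (insert B (∅ : Finset (Fin N))) = {B} from rfl,
      loc_enlarge (show A ∉ ({B} : Finset (Fin N)) by simp [hAB])]
    apply loc_congr; intro f g; ring
  have hzA : siteOp N pauliZ (a + 1)
      = Loc {A, B} (fun f g => dd (f B) (g B) * pauliZ (f A) (g A)) := by
    rw [hsite, loc_enlarge (show B ∉ ({A} : Finset (Fin N)) by simp [Ne.symm hAB]),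
      Finset.pair_comm B A]
  have hzB : siteOp N pauliZ (a + 1 + 1)
      = Loc {A, B} (fun f g => dd (f A) (g A) * pauliZ (f B) (g B)) := by
    rw [hsite2, loc_enlarge (show A ∉ ({B} : Finset (Fin N)) by simp [hAB])]
  rw [eOp, hpair, hpair, hpair, hone, hzA, hzB]
  simp only [loc_smul, loc_sub, loc_add]
  apply loc_congr
  intro f g
  rw [← kernel16 h (f A) (f B) (g A) (g B)]
  ring

end TwoB

namespace TwoB
open Finset

variable {N : ℕ} [NeZero N]

/-! ### Boundary kernels -/

def BlK (h αl θl : ℂ) (x y : Fin 2) : ℂ :=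
  1 / (2 * Complex.sinh (h * αl)) *
    (Complex.I * Complex.exp (h * θl) * pauliP x y
      + Complex.I * Complex.exp (-(h * θl)) * pauliM x y
      + Complex.cosh (h * αl) * pauliZ x y)
  + 1/2 * dd x y

def BrK (h αr θr : ℂ) (x y : Fin 2) : ℂ :=
  -(1 / (2 * Complex.sinh (h * αr))) *
    (Complex.I * Complex.exp (h * θr) * pauliP x y
      + Complex.I * Complex.exp (-(h * θr)) * pauliM x y
      + Complex.cosh (h * αr) * pauliZ x y)
  + 1/2 * dd x y

lemma blobL_eq_loc (h αl θl : ℂ) :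
    blobL N h αl θl = Loc {((0 : ℕ) : Fin N)}
      (fun f g => BlK h αl θl (f ((0 : ℕ) : Fin N)) (g ((0 : ℕ) : Fin N))) := by
  have idx : ((1 - 1 : ℕ) : Fin N) = ((0 : ℕ) : Fin N) := by norm_num
  unfold blobL
  rw [siteOp_eq_loc pauliP 1, siteOp_eq_loc pauliM 1, siteOp_eq_loc pauliZ 1, idx,
    one_eq_loc, loc_enlarge (Finset.notMem_empty ((0 : ℕ) : Fin N)),
    show (insert ((0:ℕ) : Fin N) (∅ : Finset (Fin N))) = {((0:ℕ) : Fin N)} from rfl]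
  simp only [loc_smul, loc_add]
  apply loc_congr; intro f g; simp only [BlK]; ring

lemma blobR_eq_loc (h αr θr : ℂ) :
    blobR N h αr θr = Loc {((N - 1 : ℕ) : Fin N)}
      (fun f g => BrK h αr θr (f ((N - 1 : ℕ) : Fin N)) (g ((N - 1 : ℕ) : Fin N))) := by
  unfold blobR
  rw [siteOp_eq_loc pauliP N, siteOp_eq_loc pauliM N, siteOp_eq_loc pauliZ N,
    one_eq_loc, loc_enlarge (Finset.notMem_empty ((N - 1 : ℕ) : Fin N)),
    show (insert ((N-1:ℕ) : Fin N) (∅ : Finset (Fin N))) = {((N-1:ℕ) : Fin N)} from rfl]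
  simp only [loc_smul, loc_add]
  apply loc_congr; intro f g; simp only [BrK]; ring

/-! ### closed form for Podd and Qeven -/

lemma podd_partial (h : ℂ) (t : ℕ) (ht : 2 * t ≤ N) :
    ((List.range t).map fun i => eOp N h (2 * i + 1)).prod
      = Loc (Finset.univ.filter fun k : Fin N => (k : ℕ) < 2 * t)
          (fun f g =>
            (∏ i ∈ Finset.range t, ww h (f ((2*i : ℕ) : Fin N)) (f ((2*i+1 : ℕ) : Fin N)))
            * ∏ i ∈ Finset.range t, ww h (g ((2*i : ℕ) : Fin N)) (g ((2*i+1 : ℕ) : Fin N))) := by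
  induction t with
  | zero =>
    rw [show (Finset.univ.filter fun k : Fin N => (k:ℕ) < 2*0) = (∅ : Finset (Fin N)) by
      ext k; simp]
    simp only [List.range_zero, List.map_nil, List.prod_nil, Finset.range_zero,
      Finset.prod_empty]
    rw [one_eq_loc]; apply loc_congr; intro f g; ring
  | succ t ih =>
    have h2t : 2*t < N := by omega
    have h2t1 : 2*t+1 < N := by omega
    have vA : (((2*t : ℕ) : Fin N) : ℕ) = 2*t := Fin.val_cast_of_lt h2t
    have vB : (((2*t+1 : ℕ) : Fin N) : ℕ) = 2*t+1 := Fin.val_cast_of_lt h2t1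
    have mem1 : ∀ i : ℕ, i < t → ((2*i : ℕ) : Fin N)
        ∈ Finset.univ.filter fun k : Fin N => (k : ℕ) < 2*t := by
      intro i hi
      refine Finset.mem_filter.mpr ⟨Finset.mem_univ _, ?_⟩
      rw [Fin.val_cast_of_lt (by omega)]; omega
    have mem2 : ∀ i : ℕ, i < t → ((2*i+1 : ℕ) : Fin N)
        ∈ Finset.univ.filter fun k : Fin N => (k : ℕ) < 2*t := by
      intro i hi
      refine Finset.mem_filter.mpr ⟨Finset.mem_univ _, ?_⟩
      rw [Fin.val_cast_of_lt (by omega)]; omega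
    have hdep1 : DepOn (Finset.univ.filter fun k : Fin N => (k : ℕ) < 2*t)
        (fun f g =>
          (∏ i ∈ Finset.range t, ww h (f ((2*i : ℕ) : Fin N)) (f ((2*i+1 : ℕ) : Fin N)))
          * ∏ i ∈ Finset.range t, ww h (g ((2*i : ℕ) : Fin N)) (g ((2*i+1 : ℕ) : Fin N))) := by
      intro f f' g g' hf hg
      show (∏ i ∈ Finset.range t, _) * (∏ i ∈ Finset.range t, _)
        = (∏ i ∈ Finset.range t, _) * (∏ i ∈ Finset.range t, _)
      refine congrArg₂ (· * ·) ?_ ?_ <;> refine Finset.prod_congr rfl fun i hi => ?_ <;>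
        rw [Finset.mem_range] at hi
      · rw [hf _ (mem1 i hi), hf _ (mem2 i hi)]
      · rw [hg _ (mem1 i hi), hg _ (mem2 i hi)]
    have hdep2 : DepOn ({((2*t : ℕ) : Fin N), ((2*t+1 : ℕ) : Fin N)} : Finset (Fin N))
        (fun f g => ww h (f ((2*t : ℕ) : Fin N)) (f ((2*t+1 : ℕ) : Fin N))
          * ww h (g ((2*t : ℕ) : Fin N)) (g ((2*t+1 : ℕ) : Fin N))) := by
      intro f f' g g' hf hg
      show ww h _ _ * ww h _ _ = ww h _ _ * ww h _ _
      rw [hf _ (Finset.mem_insert_self _ _),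
        hf _ (Finset.mem_insert_of_mem (Finset.mem_singleton_self _)),
        hg _ (Finset.mem_insert_self _ _),
        hg _ (Finset.mem_insert_of_mem (Finset.mem_singleton_self _))]
    have hdisj : Disjoint (Finset.univ.filter fun k : Fin N => (k : ℕ) < 2*t)
        ({((2*t : ℕ) : Fin N), ((2*t+1 : ℕ) : Fin N)} : Finset (Fin N)) := by
      rw [Finset.disjoint_left]
      intro k hk hk2
      have hkv : (k : ℕ) < 2*t := (Finset.mem_filter.mp hk).2
      rcases Finset.mem_insert.mp hk2 with hEq | hEq
      · rw [hEq, vA] at hkv; omega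
      · rw [Finset.mem_singleton.mp hEq, vB] at hkv; omega
    rw [List.range_succ, List.map_append, List.prod_append, List.map_cons, List.map_nil,
      List.prod_cons, List.prod_nil, mul_one, ih (by omega),
      eOp_eq_loc h (2*t) (by omega), loc_mul hdisj hdep1 hdep2]
    rw [show ((Finset.univ.filter fun k : Fin N => (k : ℕ) < 2*t)
          ∪ ({((2*t : ℕ) : Fin N), ((2*t+1 : ℕ) : Fin N)} : Finset (Fin N)))
        = Finset.univ.filter fun k : Fin N => (k : ℕ) < 2*(t+1) by
      ext k
      simp only [Finset.mem_union, Finset.mem_filter, Finset.mem_univ, true_and,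
        Finset.mem_insert, Finset.mem_singleton, Fin.ext_iff, vA, vB]
      omega]
    apply loc_congr; intro f g
    rw [Finset.prod_range_succ, Finset.prod_range_succ]
    ring

def Vv (N : ℕ) [NeZero N] (h : ℂ) (f : Conf N) : ℂ :=
  ∏ i ∈ Finset.range (N/2), ww h (f ((2*i : ℕ) : Fin N)) (f ((2*i+1 : ℕ) : Fin N))

lemma podd_eq (h : ℂ) (hNe : Even N) :
    Podd N h = Matrix.of (fun f g => Vv N h f * Vv N h g) := by
  have h2 : 2 * (N/2) = N := by
    rcases hNe with ⟨r, hr⟩; omega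
  rw [Podd, podd_partial h (N/2) (by omega),
    show (Finset.univ.filter fun k : Fin N => (k:ℕ) < 2*(N/2)) = Finset.univ by
      ext k; simp [h2, k.isLt],
    loc_univ]
  rfl

end TwoB

namespace TwoB
open Finset

variable {N : ℕ} [NeZero N]

lemma qeven_partial (h : ℂ) (t : ℕ) (ht : 2 * t + 2 ≤ N) :
    ((List.range t).map fun i => eOp N h (2 * i + 2)).prod
      = Loc (Finset.univ.filter fun k : Fin N => 0 < (k : ℕ) ∧ (k : ℕ) < 2*t+1)
          (fun f g =>
            (∏ i ∈ Finset.range t, ww h (f ((2*i+1 : ℕ) : Fin N)) (f ((2*i+2 : ℕ) : Fin N)))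
            * ∏ i ∈ Finset.range t, ww h (g ((2*i+1 : ℕ) : Fin N)) (g ((2*i+2 : ℕ) : Fin N))) := by
  induction t with
  | zero =>
    rw [show (Finset.univ.filter fun k : Fin N => 0 < (k:ℕ) ∧ (k:ℕ) < 2*0+1)
        = (∅ : Finset (Fin N)) by ext k; simp; omega]
    simp only [List.range_zero, List.map_nil, List.prod_nil, Finset.range_zero,
      Finset.prod_empty]
    rw [one_eq_loc]; apply loc_congr; intro f g; ring
  | succ t ih =>
    have h2t : 2*t+1 < N := by omega
    have h2t1 : 2*t+2 < N := by omega
    have vA : (((2*t+1 : ℕ) : Fin N) : ℕ) = 2*t+1 := Fin.val_cast_of_lt h2t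
    have vB : (((2*t+2 : ℕ) : Fin N) : ℕ) = 2*t+2 := Fin.val_cast_of_lt h2t1
    have mem1 : ∀ i : ℕ, i < t → ((2*i+1 : ℕ) : Fin N)
        ∈ Finset.univ.filter fun k : Fin N => 0 < (k : ℕ) ∧ (k : ℕ) < 2*t+1 := by
      intro i hi
      refine Finset.mem_filter.mpr ⟨Finset.mem_univ _, ?_⟩
      rw [Fin.val_cast_of_lt (by omega)]; omega
    have mem2 : ∀ i : ℕ, i < t → ((2*i+2 : ℕ) : Fin N)
        ∈ Finset.univ.filter fun k : Fin N => 0 < (k : ℕ) ∧ (k : ℕ) < 2*t+1 := by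
      intro i hi
      refine Finset.mem_filter.mpr ⟨Finset.mem_univ _, ?_⟩
      rw [Fin.val_cast_of_lt (by omega)]; omega
    have hdep1 : DepOn (Finset.univ.filter fun k : Fin N => 0 < (k : ℕ) ∧ (k : ℕ) < 2*t+1)
        (fun f g =>
          (∏ i ∈ Finset.range t, ww h (f ((2*i+1 : ℕ) : Fin N)) (f ((2*i+2 : ℕ) : Fin N)))
          * ∏ i ∈ Finset.range t, ww h (g ((2*i+1 : ℕ) : Fin N)) (g ((2*i+2 : ℕ) : Fin N))) := by
      intro f f' g g' hf hg
      show (∏ i ∈ Finset.range t, _) * (∏ i ∈ Finset.range t, _)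
        = (∏ i ∈ Finset.range t, _) * (∏ i ∈ Finset.range t, _)
      refine congrArg₂ (· * ·) ?_ ?_ <;> refine Finset.prod_congr rfl fun i hi => ?_ <;>
        rw [Finset.mem_range] at hi
      · rw [hf _ (mem1 i hi), hf _ (mem2 i hi)]
      · rw [hg _ (mem1 i hi), hg _ (mem2 i hi)]
    have hdep2 : DepOn ({((2*t+1 : ℕ) : Fin N), ((2*t+1+1 : ℕ) : Fin N)} : Finset (Fin N))
        (fun f g => ww h (f ((2*t+1 : ℕ) : Fin N)) (f ((2*t+1+1 : ℕ) : Fin N))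
          * ww h (g ((2*t+1 : ℕ) : Fin N)) (g ((2*t+1+1 : ℕ) : Fin N))) := by
      intro f f' g g' hf hg
      show ww h _ _ * ww h _ _ = ww h _ _ * ww h _ _
      rw [hf _ (Finset.mem_insert_self _ _),
        hf _ (Finset.mem_insert_of_mem (Finset.mem_singleton_self _)),
        hg _ (Finset.mem_insert_self _ _),
        hg _ (Finset.mem_insert_of_mem (Finset.mem_singleton_self _))]
    have hdisj : Disjoint (Finset.univ.filter fun k : Fin N => 0 < (k : ℕ) ∧ (k : ℕ) < 2*t+1)
        ({((2*t+1 : ℕ) : Fin N), ((2*t+1+1 : ℕ) : Fin N)} : Finset (Fin N)) := by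
      rw [Finset.disjoint_left]
      intro k hk hk2
      have hkv : 0 < (k : ℕ) ∧ (k : ℕ) < 2*t+1 := (Finset.mem_filter.mp hk).2
      rcases Finset.mem_insert.mp hk2 with hEq | hEq
      · rw [hEq, vA] at hkv; omega
      · rw [Finset.mem_singleton.mp hEq] at hkv
        rw [show (2*t+1+1) = 2*t+2 from rfl, vB] at hkv; omega
    rw [List.range_succ, List.map_append, List.prod_append, List.map_cons, List.map_nil,
      List.prod_cons, List.prod_nil, mul_one, ih (by omega),
      show eOp N h (2*t+2) = eOp N h (2*t+1+1) by norm_num,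
      eOp_eq_loc h (2*t+1) (by omega), loc_mul hdisj hdep1 hdep2]
    rw [show ((Finset.univ.filter fun k : Fin N => 0 < (k : ℕ) ∧ (k : ℕ) < 2*t+1)
          ∪ ({((2*t+1 : ℕ) : Fin N), ((2*t+1+1 : ℕ) : Fin N)} : Finset (Fin N)))
        = Finset.univ.filter fun k : Fin N => 0 < (k : ℕ) ∧ (k : ℕ) < 2*(t+1)+1 by
      ext k
      simp only [Finset.mem_union, Finset.mem_filter, Finset.mem_univ, true_and,
        Finset.mem_insert, Finset.mem_singleton, Fin.ext_iff, vA,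
        show (2*t+1+1) = 2*t+2 from rfl, vB]
      omega]
    apply loc_congr; intro f g
    rw [Finset.prod_range_succ, Finset.prod_range_succ,
      show ((2*t+1+1 : ℕ) : Fin N) = ((2*t+2 : ℕ) : Fin N) from rfl]
    ring

def VQ (N : ℕ) [NeZero N] (h : ℂ) (f : Conf N) : ℂ :=
  ∏ i ∈ Finset.range (N/2 - 1), ww h (f ((2*i+1 : ℕ) : Fin N)) (f ((2*i+2 : ℕ) : Fin N))

lemma qeven_eq (h : ℂ) (hN2 : 2 ≤ N) (hNe : Even N) :
    Qeven N h = Loc (Finset.univ.filter fun k : Fin N => 0 < (k : ℕ) ∧ (k : ℕ) < N - 1)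
      (fun f g => VQ N h f * VQ N h g) := by
  have h2 : 2 * (N/2) = N := by rcases hNe with ⟨r, hr⟩; omega
  rw [Qeven, qeven_partial h (N/2 - 1) (by omega),
    show (Finset.univ.filter fun k : Fin N => 0 < (k:ℕ) ∧ (k:ℕ) < 2*(N/2-1)+1)
      = Finset.univ.filter fun k : Fin N => 0 < (k:ℕ) ∧ (k:ℕ) < N - 1 by
      ext k; simp only [Finset.mem_filter, Finset.mem_univ, true_and]
      constructor
      · rintro ⟨hk1, hk2⟩; exact ⟨hk1, by omega⟩
      · rintro ⟨hk1, hk2⟩; exact ⟨hk1, by omega⟩]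
  rfl

end TwoB

namespace TwoB
open Finset

variable {N : ℕ} [NeZero N]

/-! ### The transfer chain -/

def chainW (N : ℕ) [NeZero N] (h : ℂ) (f : Conf N) : ℂ :=
  ∏ j ∈ Finset.range (N-1), ww h (f ((j : ℕ) : Fin N)) (f ((j+1 : ℕ) : Fin N))

lemma prod_split (s : ℕ) (F : ℕ → ℂ) :
    ∏ j ∈ Finset.range (2*s+1), F j
      = (∏ i ∈ Finset.range (s+1), F (2*i)) * ∏ i ∈ Finset.range s, F (2*i+1) := by
  induction s with
  | zero => simp
  | succ s ih =>
    rw [show 2*(s+1)+1 = (2*s+1)+1+1 by ring, Finset.prod_range_succ, Finset.prod_range_succ,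
      ih, Finset.prod_range_succ (f := fun i => F (2*i)) (n := s+1),
      Finset.prod_range_succ (f := fun i => F (2*i+1)) (n := s),
      show 2*s+1+1 = 2*(s+1) by ring]
    ring

lemma vv_vq_eq_chain (h : ℂ) (hN2 : 2 ≤ N) (hNe : Even N) (f : Conf N) :
    Vv N h f * VQ N h f = chainW N h f := by
  have h2 : 2*(N/2) = N := by rcases hNe with ⟨r, hr⟩; omega
  have hN1 : N - 1 = 2*(N/2 - 1)+1 := by omega
  have hNh : N/2 = (N/2 - 1) + 1 := by omega
  unfold Vv VQ chainW
  rw [hN1, prod_split (N/2 - 1) (fun j => ww h (f ((j : ℕ) : Fin N)) (f ((j+1 : ℕ) : Fin N)))]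
  rw [hNh]
  rfl

lemma ww_ne_zero {h : ℂ} {x y : Fin 2} (hne : ww h x y ≠ 0) : (y : ℕ) = 1 - (x : ℕ) := by
  fin_cases x <;> fin_cases y <;> simp [ww] at hne ⊢

def altC (N : ℕ) [NeZero N] (a : Fin 2) : Conf N :=
  fun k => ⟨((a : ℕ) + (k : ℕ)) % 2, Nat.mod_lt _ (by norm_num)⟩

lemma chain_support (h : ℂ) {f : Conf N} (hne : chainW N h f ≠ 0) :
    f = altC N (f ((0 : ℕ) : Fin N)) := by
  unfold chainW at hne
  rw [Finset.prod_ne_zero_iff] at hne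
  have i0 := (f ((0:ℕ) : Fin N)).isLt
  have key : ∀ j (hj : j < N),
      ((f ⟨j, hj⟩ : Fin 2) : ℕ) = (((f ((0:ℕ) : Fin N)) : ℕ) + j) % 2 := by
    intro j
    induction j with
    | zero =>
      intro hj
      have e0 : ((0:ℕ) : Fin N) = ⟨0, hj⟩ := Fin.ext (Fin.val_cast_of_lt hj)
      rw [← e0]
      omega
    | succ j ihj =>
      intro hj
      have hjN : j < N := by omega
      have hbond : j ∈ Finset.range (N-1) := by rw [Finset.mem_range]; omega
      have hww := hne j hbond
      have e1 : ((j : ℕ) : Fin N) = ⟨j, hjN⟩ := Fin.ext (Fin.val_cast_of_lt hjN)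
      have e2 : ((j+1 : ℕ) : Fin N) = ⟨j+1, hj⟩ := Fin.ext (Fin.val_cast_of_lt hj)
      rw [e1, e2] at hww
      have hstep := ww_ne_zero hww
      have hprev := ihj hjN
      have i1 := (f ⟨j, hjN⟩).isLt
      have i2 := (f ⟨j+1, hj⟩).isLt
      omega
  funext k
  apply Fin.ext
  have hk := key (k : ℕ) k.isLt
  rw [show (⟨(k:ℕ), k.isLt⟩ : Fin N) = k from Fin.ext rfl] at hk
  rw [hk]
  rfl

lemma prod_odd_chain (g : ℕ → ℂ) (hg : ∀ j, g j * g (j+1) = -1) (k : ℕ) :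
    ∏ j ∈ Finset.range (2*k+1), g j = (-1)^k * g 0 := by
  induction k with
  | zero => simp
  | succ k ih =>
    rw [show 2*(k+1)+1 = (2*k+1)+1+1 by ring, Finset.prod_range_succ,
      Finset.prod_range_succ, ih]
    have hgk := hg (2*k+1)
    linear_combination ((-1:ℂ)^k * g 0) * hgk

lemma chainW_alt (h : ℂ) (hN2 : 2 ≤ N) (hNe : Even N) (a : Fin 2) :
    chainW N h (altC N a) = (-1)^(N/2-1) *
      (if (a : ℕ) = 0 then Complex.exp (h/2) else -Complex.exp (-(h/2))) := by
  have h2 : 2*(N/2) = N := by rcases hNe with ⟨r, hr⟩; omega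
  have E3 : Complex.exp (h/2) * Complex.exp (-(h/2)) = 1 := by
    rw [← Complex.exp_add, show h/2 + -(h/2) = 0 by ring, Complex.exp_zero]
  set g : ℕ → ℂ := fun j =>
    ww h ⟨((a:ℕ)+j) % 2, by omega⟩ ⟨((a:ℕ)+j+1) % 2, by omega⟩ with hgdef
  have hg : ∀ j, g j * g (j+1) = -1 := by
    intro j
    rcases Nat.even_or_odd ((a:ℕ)+j) with hp | hp
    · have h0 : ((a:ℕ)+j)%2 = 0 := Nat.even_iff.mp hp
      have h1 : ((a:ℕ)+j+1)%2 = 1 := by omega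
      have h2' : ((a:ℕ)+(j+1))%2 = 1 := by omega
      have h3 : ((a:ℕ)+(j+1)+1)%2 = 0 := by omega
      simp only [hgdef, h0, h1, h2', h3, ww]
      norm_num
      linear_combination E3
    · have h0 : ((a:ℕ)+j)%2 = 1 := Nat.odd_iff.mp hp
      have h1 : ((a:ℕ)+j+1)%2 = 0 := by omega
      have h2' : ((a:ℕ)+(j+1))%2 = 0 := by omega
      have h3 : ((a:ℕ)+(j+1)+1)%2 = 1 := by omega
      simp only [hgdef, h0, h1, h2', h3, ww]
      norm_num
      linear_combination E3
  have hterm : ∀ j ∈ Finset.range (N-1),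
      ww h (altC N a ((j : ℕ) : Fin N)) (altC N a ((j+1 : ℕ) : Fin N)) = g j := by
    intro j hj
    rw [Finset.mem_range] at hj
    have hjN : j < N := by omega
    have hj1N : j + 1 < N := by omega
    have vj : (((j : ℕ) : Fin N) : ℕ) = j := Fin.val_cast_of_lt hjN
    have vj1 : (((j+1 : ℕ) : Fin N) : ℕ) = j+1 := Fin.val_cast_of_lt hj1N
    have eA : altC N a ((j : ℕ) : Fin N) = ⟨((a:ℕ)+j) % 2, by omega⟩ := by
      apply Fin.ext
      show ((a:ℕ) + (((j : ℕ) : Fin N) : ℕ)) % 2 = ((a:ℕ)+j) % 2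
      rw [vj]
    have eB : altC N a ((j+1 : ℕ) : Fin N) = ⟨((a:ℕ)+j+1) % 2, by omega⟩ := by
      apply Fin.ext
      show ((a:ℕ) + (((j+1 : ℕ) : Fin N) : ℕ)) % 2 = ((a:ℕ)+j+1) % 2
      rw [vj1]
      omega
    rw [eA, eB]
  unfold chainW
  rw [Finset.prod_congr rfl hterm, show N-1 = 2*(N/2-1)+1 by omega, prod_odd_chain g hg]
  congr 1
  fin_cases a <;> simp [hgdef, ww]

end TwoB

namespace TwoB
open Finset

variable {N : ℕ} [NeZero N]

lemma triple_lemma (V : Conf N → ℂ) (Km : Conf N → Conf N → ℂ) :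
    Matrix.of (fun f g => V f * V g) * Matrix.of Km * Matrix.of (fun f g => V f * V g)
      = (∑ u : Conf N, ∑ u', V u * Km u u' * V u')
          • Matrix.of (fun f g => V f * V g) := by
  ext f g
  simp only [Matrix.mul_apply, Matrix.of_apply, Matrix.smul_apply, smul_eq_mul,
    Finset.sum_mul, Finset.mul_sum]
  rw [Finset.sum_comm]
  apply Finset.sum_congr rfl; intro u' _
  apply Finset.sum_congr rfl; intro u _
  ring

end TwoB

open TwoB in
/-- For even `N`, the spin-chain operators satisfy the two-boundary
Temperley–Lieb loop relation `P b_l Q b_r P = Y · P`, where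
`Y = sinh(h(α_l+α_r+1+Θ)/2) sinh(h(α_l+α_r+1−Θ)/2) / (sinh(hα_l) sinh(hα_r))`
and `Θ = θ_l − θ_r`. -/
theorem two_boundary_loop_relation (N : ℕ) [NeZero N] (hN : 2 ≤ N) (hNeven : Even N)
    (h αl θl αr θr : ℂ)
    (hαl : Complex.sinh (h * αl) ≠ 0) (hαr : Complex.sinh (h * αr) ≠ 0) :
    Podd N h * blobL N h αl θl * Qeven N h * blobR N h αr θr * Podd N h
      = (Complex.sinh (h * (αl + αr + 1 + (θl - θr)) / 2)
          * Complex.sinh (h * (αl + αr + 1 - (θl - θr)) / 2)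
          / (Complex.sinh (h * αl) * Complex.sinh (h * αr))) • Podd N h := by
  classical
  have h2 : 2 * (N/2) = N := by rcases hNeven with ⟨r, hr⟩; omega
  set z0 : Fin N := ((0 : ℕ) : Fin N) with hz0
  set zl : Fin N := ((N - 1 : ℕ) : Fin N) with hzl
  have vz0 : (z0 : ℕ) = 0 := Fin.val_cast_of_lt (by omega)
  have vzl : (zl : ℕ) = N - 1 := Fin.val_cast_of_lt (by omega)
  set SQ : Finset (Fin N) :=
    Finset.univ.filter (fun k : Fin N => 0 < (k:ℕ) ∧ (k:ℕ) < N - 1) with hSQ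
  have depBl : DepOn {z0} (fun f g : Conf N => BlK h αl θl (f z0) (g z0)) :=
    depOn_single _ _
  have depBr : DepOn {zl} (fun f g : Conf N => BrK h αr θr (f zl) (g zl)) :=
    depOn_single _ _
  have memQ1 : ∀ i : ℕ, i < N/2 - 1 → ((2*i+1 : ℕ) : Fin N) ∈ SQ := by
    intro i hi
    refine Finset.mem_filter.mpr ⟨Finset.mem_univ _, ?_⟩
    rw [Fin.val_cast_of_lt (by omega)]; omega
  have memQ2 : ∀ i : ℕ, i < N/2 - 1 → ((2*i+2 : ℕ) : Fin N) ∈ SQ := by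
    intro i hi
    refine Finset.mem_filter.mpr ⟨Finset.mem_univ _, ?_⟩
    rw [Fin.val_cast_of_lt (by omega)]; omega
  have depQ : DepOn SQ (fun f g : Conf N => VQ N h f * VQ N h g) := by
    intro f f' g g' hf hg
    show VQ N h f * VQ N h g = VQ N h f' * VQ N h g'
    unfold VQ
    refine congrArg₂ (· * ·) ?_ ?_ <;> refine Finset.prod_congr rfl fun i hi => ?_ <;>
      rw [Finset.mem_range] at hi
    · rw [hf _ (memQ1 i hi), hf _ (memQ2 i hi)]
    · rw [hg _ (memQ1 i hi), hg _ (memQ2 i hi)]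
  have disj1 : Disjoint ({z0} : Finset (Fin N)) SQ := by
    rw [Finset.disjoint_left]
    intro k hk hk2
    rw [Finset.mem_singleton] at hk
    have := (Finset.mem_filter.mp hk2).2
    rw [hk, vz0] at this; omega
  have hM1 : blobL N h αl θl * Qeven N h
      = Loc ({z0} ∪ SQ) (fun f g =>
          BlK h αl θl (f z0) (g z0) * (VQ N h f * VQ N h g)) := by
    rw [blobL_eq_loc, qeven_eq h hN hNeven]
    exact loc_mul disj1 depBl depQ
  have depM1 : DepOn ({z0} ∪ SQ) (fun f g : Conf N =>
      BlK h αl θl (f z0) (g z0) * (VQ N h f * VQ N h g)) := by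
    intro f f' g g' hf hg
    exact congrArg₂ (· * ·)
      (depBl f f' g g' (fun k hk => hf k (Finset.mem_union_left _ hk))
        (fun k hk => hg k (Finset.mem_union_left _ hk)))
      (depQ f f' g g' (fun k hk => hf k (Finset.mem_union_right _ hk))
        (fun k hk => hg k (Finset.mem_union_right _ hk)))
  have disj2 : Disjoint (({z0} : Finset (Fin N)) ∪ SQ) ({zl} : Finset (Fin N)) := by
    rw [Finset.disjoint_right]
    intro k hk hk2
    rw [Finset.mem_singleton] at hk
    rcases Finset.mem_union.mp hk2 with hk' | hk'
    · rw [Finset.mem_singleton] at hk'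
      rw [hk] at hk'
      have : (zl : ℕ) = (z0 : ℕ) := by rw [hk']
      rw [vzl, vz0] at this; omega
    · have := (Finset.mem_filter.mp hk').2
      rw [hk, vzl] at this; omega
  have hM2 : blobL N h αl θl * Qeven N h * blobR N h αr θr
      = Loc (({z0} ∪ SQ) ∪ {zl}) (fun f g =>
          BlK h αl θl (f z0) (g z0) * (VQ N h f * VQ N h g)
            * BrK h αr θr (f zl) (g zl)) := by
    rw [hM1, blobR_eq_loc]
    exact loc_mul disj2 depM1 depBr
  have hSu : (({z0} : Finset (Fin N)) ∪ SQ) ∪ {zl} = Finset.univ := by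
    ext k
    have hk := k.isLt
    simp only [Finset.mem_union, Finset.mem_singleton, Finset.mem_filter, Finset.mem_univ,
      true_and, iff_true, hSQ, Fin.ext_iff, vz0, vzl]
    omega
  have hMid : blobL N h αl θl * Qeven N h * blobR N h αr θr
      = Matrix.of (fun f g =>
          BlK h αl θl (f z0) (g z0) * (VQ N h f * VQ N h g)
            * BrK h αr θr (f zl) (g zl)) := by
    rw [hM2, hSu, loc_univ]
  have hassoc : Podd N h * blobL N h αl θl * Qeven N h * blobR N h αr θr * Podd N h
      = Podd N h * (blobL N h αl θl * Qeven N h * blobR N h αr θr) * Podd N h := by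
    simp only [mul_assoc]
  rw [hassoc, hMid, podd_eq h hNeven, triple_lemma]
  congr 1
  have hW : ∀ u u' : Conf N,
      Vv N h u * (BlK h αl θl (u z0) (u' z0) * (VQ N h u * VQ N h u')
          * BrK h αr θr (u zl) (u' zl)) * Vv N h u'
        = chainW N h u * (chainW N h u'
            * (BlK h αl θl (u z0) (u' z0) * BrK h αr θr (u zl) (u' zl))) := by
    intro u u'
    rw [← vv_vq_eq_chain h hN hNeven u, ← vv_vq_eq_chain h hN hNeven u']
    ring
  rw [Finset.sum_congr rfl fun u _ => Finset.sum_congr rfl fun u' _ => hW u u']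
  have h01 : ∀ x : Fin 2, x = 0 ∨ x = 1 := by decide
  have hvan : ∀ u : Conf N, u ∉ ({altC N 0, altC N 1} : Finset (Conf N)) →
      chainW N h u = 0 := by
    intro u hu
    by_contra hne
    apply hu
    have hsup := chain_support h hne
    rcases h01 (u z0) with h' | h'
    · rw [hsup, h']; exact Finset.mem_insert_self _ _
    · rw [hsup, h']; exact Finset.mem_insert_of_mem (Finset.mem_singleton_self _)
  have hne01 : altC N 0 ≠ altC N 1 := by
    intro hEq
    have hcf := congrFun hEq z0
    have h0v : (altC N 0 z0 : ℕ) = 0 := by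
      show (((0 : Fin 2) : ℕ) + (z0 : ℕ)) % 2 = 0
      rw [vz0]; rfl
    have h1v : (altC N 1 z0 : ℕ) = 1 := by
      show (((1 : Fin 2) : ℕ) + (z0 : ℕ)) % 2 = 1
      rw [vz0]; rfl
    rw [hcf, h1v] at h0v; omega
  rw [← Finset.sum_subset (Finset.subset_univ ({altC N 0, altC N 1} : Finset (Conf N)))
    (fun u _ hu => Finset.sum_eq_zero fun u' _ => by rw [hvan u hu, zero_mul])]
  have hinner : ∀ u ∈ ({altC N 0, altC N 1} : Finset (Conf N)),
      (∑ u' : Conf N, chainW N h u * (chainW N h u'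
          * (BlK h αl θl (u z0) (u' z0) * BrK h αr θr (u zl) (u' zl))))
        = ∑ u' ∈ ({altC N 0, altC N 1} : Finset (Conf N)),
            chainW N h u * (chainW N h u'
              * (BlK h αl θl (u z0) (u' z0) * BrK h αr θr (u zl) (u' zl))) := by
    intro u _
    exact (Finset.sum_subset (Finset.subset_univ _)
      (fun u' _ hu' => by rw [hvan u' hu', zero_mul, mul_zero])).symm
  rw [Finset.sum_congr rfl hinner, Finset.sum_pair hne01, Finset.sum_pair hne01,
    Finset.sum_pair hne01]
  have altz0 : ∀ a : Fin 2, altC N a z0 = a := by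
    intro a
    apply Fin.ext
    show ((a : ℕ) + (z0 : ℕ)) % 2 = (a : ℕ)
    have := a.isLt
    rw [vz0]; omega
  have altzl0 : altC N 0 zl = 1 := by
    apply Fin.ext
    show (((0 : Fin 2) : ℕ) + (zl : ℕ)) % 2 = ((1 : Fin 2) : ℕ)
    rw [vzl]
    show (0 + (N-1)) % 2 = 1
    omega
  have altzl1 : altC N 1 zl = 0 := by
    apply Fin.ext
    show (((1 : Fin 2) : ℕ) + (zl : ℕ)) % 2 = ((0 : Fin 2) : ℕ)
    rw [vzl]
    show (1 + (N-1)) % 2 = 0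
    omega
  rw [altz0, altz0, altzl0, altzl1, chainW_alt h hN hNeven 0, chainW_alt h hN hNeven 1]
  simp only [Fin.val_zero, Fin.val_one]
  norm_num
  have hgam : ∀ X Y Z : ℂ,
      ((-1:ℂ)^(N/2-1) * X) * (((-1:ℂ)^(N/2-1) * Y) * Z) = X * (Y * Z) := by
    intro X Y Z
    have hss : ((-1:ℂ)^(N/2-1)) * ((-1:ℂ)^(N/2-1)) = 1 := by
      rw [← pow_add]
      exact Even.neg_one_pow ⟨N/2-1, rfl⟩
    linear_combination (X * Y * Z) * hss
  simp only [hgam]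
  have E1 : Complex.exp (h/2) * Complex.exp (h/2) = Complex.cosh h + Complex.sinh h := by
    rw [← Complex.exp_add, show h/2 + h/2 = h by ring, Complex.cosh_add_sinh]
  have E2 : Complex.exp (-(h/2)) * Complex.exp (-(h/2))
      = Complex.cosh h - Complex.sinh h := by
    rw [← Complex.exp_add, show -(h/2) + -(h/2) = -h by ring, Complex.cosh_sub_sinh]
  have E3 : Complex.exp (h/2) * Complex.exp (-(h/2)) = 1 := by
    rw [← Complex.exp_add, show h/2 + -(h/2) = 0 by ring, Complex.exp_zero]
  have q1 : ∀ X : ℂ, Complex.exp (h/2) * (Complex.exp (h/2) * X)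
      = (Complex.cosh h + Complex.sinh h) * X := by
    intro X; linear_combination X * E1
  have q2 : ∀ X : ℂ, Complex.exp (h/2) * (Complex.exp (-(h/2)) * X) = X := by
    intro X; linear_combination X * E3
  have q3 : ∀ X : ℂ, Complex.exp (-(h/2)) * (Complex.exp (h/2) * X) = X := by
    intro X; linear_combination X * E3
  have q4 : ∀ X : ℂ, Complex.exp (-(h/2)) * (Complex.exp (-(h/2)) * X)
      = (Complex.cosh h - Complex.sinh h) * X := by
    intro X; linear_combination X * E2
  simp only [q1, q2, q3, q4]
  have P00 : BlK h αl θl 0 0 * BrK h αr θr 1 1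
      = Complex.exp (h*αl) * Complex.exp (h*αr)
          / (4 * (Complex.sinh (h*αl) * Complex.sinh (h*αr))) := by
    simp only [BlK, BrK, pauliP, pauliM, pauliZ, dd]
    norm_num [Matrix.cons_val_zero, Matrix.cons_val_one, Matrix.head_cons]
    field_simp
    rw [← Complex.cosh_add_sinh (h*αl), ← Complex.cosh_add_sinh (h*αr)]
    ring
  have P11 : BlK h αl θl 1 1 * BrK h αr θr 0 0
      = Complex.exp (-(h*αl)) * Complex.exp (-(h*αr))
          / (4 * (Complex.sinh (h*αl) * Complex.sinh (h*αr))) := by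
    simp only [BlK, BrK, pauliP, pauliM, pauliZ, dd]
    norm_num [Matrix.cons_val_zero, Matrix.cons_val_one, Matrix.head_cons]
    field_simp
    rw [← Complex.cosh_sub_sinh (h*αl), ← Complex.cosh_sub_sinh (h*αr)]
    ring
  have P01 : BlK h αl θl 0 1 * BrK h αr θr 1 0
      = Complex.exp (h*θl) * Complex.exp (-(h*θr))
          / (4 * (Complex.sinh (h*αl) * Complex.sinh (h*αr))) := by
    simp only [BlK, BrK, pauliP, pauliM, pauliZ, dd]
    norm_num [Matrix.cons_val_zero, Matrix.cons_val_one, Matrix.head_cons]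
    field_simp
    rw [Complex.I_sq]
    ring
  have P10 : BlK h αl θl 1 0 * BrK h αr θr 0 1
      = Complex.exp (-(h*θl)) * Complex.exp (h*θr)
          / (4 * (Complex.sinh (h*αl) * Complex.sinh (h*αr))) := by
    simp only [BlK, BrK, pauliP, pauliM, pauliZ, dd]
    norm_num [Matrix.cons_val_zero, Matrix.cons_val_one, Matrix.head_cons]
    field_simp
    rw [Complex.I_sq]
    ring
  rw [P00, P01, P10, P11,
    Complex.cosh_add_sinh, Complex.cosh_sub_sinh,
    show Complex.sinh (h * (αl + αr + 1 + (θl - θr)) / 2)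
      = (Complex.exp (h * (αl + αr + 1 + (θl - θr)) / 2)
          - Complex.exp (-(h * (αl + αr + 1 + (θl - θr)) / 2))) / 2 from rfl,
    show Complex.sinh (h * (αl + αr + 1 - (θl - θr)) / 2)
      = (Complex.exp (h * (αl + αr + 1 - (θl - θr)) / 2)
          - Complex.exp (-(h * (αl + αr + 1 - (θl - θr)) / 2))) / 2 from rfl]
  have k1 : Complex.exp (h * (αl + αr + 1 + (θl - θr)) / 2)
        * Complex.exp (h * (αl + αr + 1 - (θl - θr)) / 2)
      = Complex.exp (h*αl) * Complex.exp (h*αr) * Complex.exp h := by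
    simp only [← Complex.exp_add]; congr 1; ring
  have k1' : Complex.exp (-(h * (αl + αr + 1 + (θl - θr)) / 2))
        * Complex.exp (-(h * (αl + αr + 1 - (θl - θr)) / 2))
      = Complex.exp (-(h*αl)) * Complex.exp (-(h*αr)) * Complex.exp (-h) := by
    simp only [← Complex.exp_add]; congr 1; ring
  have k2 : Complex.exp (h * (αl + αr + 1 + (θl - θr)) / 2)
        * Complex.exp (-(h * (αl + αr + 1 - (θl - θr)) / 2))
      = Complex.exp (h*θl) * Complex.exp (-(h*θr)) := by
    simp only [← Complex.exp_add]; congr 1; ring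
  have k2' : Complex.exp (-(h * (αl + αr + 1 + (θl - θr)) / 2))
        * Complex.exp (h * (αl + αr + 1 - (θl - θr)) / 2)
      = Complex.exp (-(h*θl)) * Complex.exp (h*θr) := by
    simp only [← Complex.exp_add]; congr 1; ring
  linear_combination (1 / (4 * (Complex.sinh (h*αl) * Complex.sinh (h*αr)))) *
    (-k1 + k2 + k2' - k1')
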